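/- If g is a goal function for a Boolean function f on n variables, then f can be recovered from g up to complementation: the functions whose goal function is g are exactly f and its negation ¬f. -/

import Mathlib

attribute [local instance] Classical.propDecidable

/-- `b'` extends the partial assignment `b`: it agrees on all non-`*` coordinates of `b`. -/
def Extends {n : ℕ} (b' b : Fin n → Option Bool) : Prop :=
  ∀ i v, b i = some v → b' i = some v

/-- A total assignment `x` extends the partial assignment `b`. -/
def TExtends {n : ℕ} (x : Fin n → Bool) (b : Fin n → Option Bool) : Prop :=
  ∀ i v, b i = some v → x i = v

/-- `b` is a certificate of `f`: `f` is constant on all total extensions of `b`. -/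
def IsCert {n : ℕ} (f : (Fin n → Bool) → Bool) (b : Fin n → Option Bool) : Prop :=
  ∀ x y, TExtends x b → TExtends y b → f x = f y

/-- `b` is a `k`-certificate of `f`: it forces `f` to the value `k`. -/
def IsKCert {n : ℕ} (f : (Fin n → Bool) → Bool) (k : Bool) (b : Fin n → Option Bool) : Prop :=
  ∀ x, TExtends x b → f x = k

/-- A certificate is minimal if no proper restriction of it is a certificate. -/
def MinCert {n : ℕ} (f : (Fin n → Bool) → Bool) (c : Fin n → Option Bool) : Prop :=
  IsCert f c ∧ ∀ c', Extends c c' → c' ≠ c → ¬ IsCert f c'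

/-- A `k`-certificate is minimal if no proper restriction of it is a `k`-certificate. -/
def MinKCert {n : ℕ} (f : (Fin n → Bool) → Bool) (k : Bool) (c : Fin n → Option Bool) : Prop :=
  IsKCert f k c ∧ ∀ c', Extends c c' → c' ≠ c → ¬ IsKCert f k c'

/-- Monotone utility function: filling in `*`'s never decreases the value. -/
def Mono {n : ℕ} (g : (Fin n → Option Bool) → ℕ) : Prop :=
  ∀ b b', Extends b' b → g b ≤ g b'

/-- Submodular utility function: marginal gains shrink under extension. -/
def Submod {n : ℕ} (g : (Fin n → Option Bool) → ℕ) : Prop :=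
  ∀ b b' (i : Fin n) (ℓ : Bool), Extends b' b → b i = none → b' i = none →
    g (Function.update b' i (some ℓ)) + g b ≤ g (Function.update b i (some ℓ)) + g b'

/-- `g` is a goal function for `f` with goal value `Q`. -/
def GoalFn {n : ℕ} (f : (Fin n → Bool) → Bool) (g : (Fin n → Option Bool) → ℕ)
    (Q : ℕ) : Prop :=
  Mono g ∧ Submod g ∧ ∀ b, g b = Q ↔ IsCert f b

/-- `g` is a `k`-goal function for `f` with goal value `Q`. -/
def KGoalFn {n : ℕ} (f : (Fin n → Bool) → Bool) (k : Bool)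
    (g : (Fin n → Option Bool) → ℕ) (Q : ℕ) : Prop :=
  Mono g ∧ Submod g ∧ (∀ b, IsKCert f k b → g b = Q) ∧ (∀ b, ¬ IsKCert f k b → g b < Q)

/-- The goal value `Γ(f)`: the minimum goal value of any goal function for `f`. -/
noncomputable def gamma {n : ℕ} (f : (Fin n → Bool) → Bool) : ℕ :=
  sInf {Q | ∃ g, GoalFn f g Q}

/-- The `k`-goal value `Γ^k(f)`. -/
noncomputable def gammaK {n : ℕ} (f : (Fin n → Bool) → Bool) (k : Bool) : ℕ :=
  sInf {Q | ∃ g, KGoalFn f k g Q}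

/-- The weight of a partial assignment: the number of non-`*` coordinates. -/
noncomputable def wt {n : ℕ} (b : Fin n → Option Bool) : ℕ :=
  (Finset.univ.filter (fun i => (b i).isSome)).card

/-- `f` depends on its `i`-th variable. -/
def DependsOnVar {n : ℕ} (f : (Fin n → Bool) → Bool) (i : Fin n) : Prop :=
  ∃ x, f (Function.update x i true) ≠ f (Function.update x i false)


lemma total_cert {n : ℕ} (f : (Fin n → Bool) → Bool) (x : Fin n → Bool) :
    IsCert f (fun i => some (x i)) := by
  intro y z hy hz
  have hyx : y = x := funext fun i => hy i (x i) rfl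
  have hzx : z = x := funext fun i => hz i (x i) rfl
  rw [hyx, hzx]

lemma cert_neg {n : ℕ} (f : (Fin n → Bool) → Bool) (b : Fin n → Option Bool) :
    IsCert (fun x => !(f x)) b ↔ IsCert f b := by
  constructor <;> intro h x y hx hy <;> have := h x y hx hy <;> simpa using this

lemma edge_cert {n : ℕ} (f : (Fin n → Bool) → Bool) (x : Fin n → Bool) (i : Fin n) :
    IsCert f (fun j => if j = i then none else some (x j)) ↔
      f (Function.update x i true) = f (Function.update x i false) := by
  constructor
  · intro h
    apply h <;> intro j v hj <;> by_cases hji : j = i <;> simp [hji] at hj <;>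
      simp [Function.update, hji, hj]
  · intro h y z hy hz
    have hy' : y = Function.update x i (y i) := by
      funext j
      by_cases hji : j = i
      · subst hji; simp
      · have := hy j (x j) (by simp [hji])
        simp [Function.update, hji, this]
    have hz' : z = Function.update x i (z i) := by
      funext j
      by_cases hji : j = i
      · subst hji; simp
      · have := hz j (x j) (by simp [hji])
        simp [Function.update, hji, this]
    rw [hy', hz']
    cases y i <;> cases z i <;> simp [h]

lemma xor_key : ∀ a b a' b' : Bool, (a = b ↔ a' = b') → xor a a' = xor b b' := by decide

/-- a goal function determines its Boolean function up to complementation. -/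
theorem stmt0 {n : ℕ} (f : (Fin n → Bool) → Bool) (g : (Fin n → Option Bool) → ℕ) (Q : ℕ)
    (hg : GoalFn f g Q) (f' : (Fin n → Bool) → Bool) :
    (∃ Q', GoalFn f' g Q') ↔ (f' = f ∨ f' = fun x => !(f x)) := by
  obtain ⟨hmono, hsub, hQ⟩ := hg
  constructor
  · rintro ⟨Q', hmono', hsub', hQ'⟩
    -- the goal values agree
    set x0 : Fin n → Bool := fun _ => false with hx0
    have hQQ' : Q = Q' := by
      have h1 : g (fun i => some (x0 i)) = Q := (hQ _).mpr (total_cert f x0)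
      have h2 : g (fun i => some (x0 i)) = Q' := (hQ' _).mpr (total_cert f' x0)
      rw [← h1, h2]
    have hiff : ∀ b, IsCert f b ↔ IsCert f' b := fun b =>
      ((hQ b).symm.trans (by rw [hQQ']; exact hQ' b))
    have hedge : ∀ (x : Fin n → Bool) (i : Fin n),
        (f (Function.update x i true) = f (Function.update x i false)) ↔
        (f' (Function.update x i true) = f' (Function.update x i false)) :=
      fun x i => (edge_cert f x i).symm.trans ((hiff _).trans (edge_cert f' x i))
    have hadj : ∀ (x : Fin n → Bool) (i : Fin n) (t : Bool),
        xor (f (Function.update x i t)) (f' (Function.update x i t)) = xor (f x) (f' x) := by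
      intro x i t
      have key := xor_key _ _ _ _ (hedge x i)
      rcases eq_or_ne t (x i) with h | h
      · rw [h, Function.update_eq_self]
      · cases t with
        | false =>
          cases hxi : x i with
          | false => exact absurd hxi (Ne.symm h)
          | true =>
            conv_rhs => rw [← Function.update_eq_self i x, hxi]
            exact key.symm
        | true =>
          cases hxi : x i with
          | true => exact absurd hxi (Ne.symm h)
          | false =>
            conv_rhs => rw [← Function.update_eq_self i x, hxi]
            exact key
    have hD : ∀ x : Fin n → Bool, xor (f x) (f' x) = xor (f x0) (f' x0) := by
      have main : ∀ (S : Finset (Fin n)) (x : Fin n → Bool),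
          (∀ i, x i ≠ x0 i → i ∈ S) → xor (f x) (f' x) = xor (f x0) (f' x0) := by
        intro S
        induction S using Finset.induction_on with
        | empty =>
          intro x hx
          have : x = x0 := funext fun i => by
            by_contra h
            exact absurd (hx i h) (Finset.notMem_empty i)
          rw [this]
        | @insert a S ha ih =>
          intro x hx
          have h1 := hadj x a (x0 a)
          have h2 : xor (f (Function.update x a (x0 a))) (f' (Function.update x a (x0 a)))
              = xor (f x0) (f' x0) := by
            apply ih
            intro i hi
            by_cases hia : i = a
            · subst hia; simp at hi
            · rw [Function.update_of_ne hia] at hi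
              have := hx i hi
              rcases Finset.mem_insert.mp this with h | h
              · exact absurd h hia
              · exact h
          rw [← h1, h2]
      intro x
      exact main Finset.univ x (fun i _ => Finset.mem_univ i)
    have hf' : ∀ x, f' x = xor (f x) (xor (f x0) (f' x0)) := by
      intro x
      have := hD x
      cases hfx : f x <;> cases hfx' : f' x <;> rw [hfx, hfx'] at this <;>
        simp [hfx, hfx', ← this]
    cases hcv : xor (f x0) (f' x0) with
    | false => left; funext x; rw [hf' x, hcv]; simp
    | true => right; funext x; rw [hf' x, hcv]; simp
  · rintro (rfl | rfl)
    · exact ⟨Q, hmono, hsub, hQ⟩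
    · exact ⟨Q, hmono, hsub, fun b => (hQ b).trans (cert_neg f b).symm⟩
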